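/- For every finite graph G with independence number α and every 2-colouring of the edges of G, there exists a covering set for G consisting of at most α monochromatic subgraphs, each of which has diameter at most 8α² + 12α + 4. -/

import Mathlib

set_option linter.unusedSectionVars false
set_option linter.unusedVariables false
set_option maxHeartbeats 1000000

namespace BDKaux

open SimpleGraph Finset

variable {V : Type*} [Fintype V]

attribute [local instance] Classical.propDecidable

/-- Restriction of a graph to a finset of vertices. -/
def restrict (c : SimpleGraph V) (W : Finset V) : SimpleGraph V where
  Adj u v := c.Adj u v ∧ u ∈ W ∧ v ∈ W
  symm := ⟨fun _ _ ⟨h, hu, hv⟩ => ⟨h.symm, hv, hu⟩⟩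
  loopless := ⟨fun u h => c.loopless.irrefl u h.1⟩

lemma restrict_le (c : SimpleGraph V) (W : Finset V) : restrict c W ≤ c := fun _ _ h => h.1

lemma restrict_adj {c : SimpleGraph V} {W : Finset V} {u v : V} :
    (restrict c W).Adj u v ↔ c.Adj u v ∧ u ∈ W ∧ v ∈ W := Iff.rfl

/-- Support of a walk lies in `W` (given the start does). -/
lemma walk_support_mem {c : SimpleGraph V} {W : Finset V}
    (hcW : ∀ {u v : V}, c.Adj u v → u ∈ W ∧ v ∈ W) {a b : V}
    (p : c.Walk a b) (ha : a ∈ W) : ∀ z ∈ p.support, z ∈ W := by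
  induction p with
  | nil => intro z hz; rw [SimpleGraph.Walk.support_nil, List.mem_singleton] at hz; subst hz; exact ha
  | cons h q ih =>
    intro z hz
    rw [SimpleGraph.Walk.support_cons, List.mem_cons] at hz
    rcases hz with rfl | hz
    · exact ha
    · exact ih (hcW h).2 z hz

/-- Endpoints of a pair at positive finite distance lie in `W`. -/
lemma ends_mem {c : SimpleGraph V} {W : Finset V}
    (hcW : ∀ {u v : V}, c.Adj u v → u ∈ W ∧ v ∈ W) {a b : V} {n : ℕ}
    (h : c.edist a b = (n : ℕ∞)) (hn : 0 < n) : a ∈ W ∧ b ∈ W := by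
  obtain ⟨p, hp⟩ := SimpleGraph.exists_walk_of_edist_eq_coe h
  cases p with
  | nil => simp at hp; omega
  | cons hadj q =>
    have ha : a ∈ W := (hcW hadj).1
    exact ⟨ha, walk_support_mem hcW (SimpleGraph.Walk.cons hadj q) ha b (SimpleGraph.Walk.end_mem_support _)⟩

lemma edist_of_mem_support {c : SimpleGraph V} {a b z : V}
    (p : c.Walk a b) (hz : z ∈ p.support) : c.edist a z ≤ (p.length : ℕ∞) := by
  classical
  exact le_trans (SimpleGraph.Walk.edist_le _) (Nat.cast_le.mpr (p.length_takeUntil_le hz))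

/-- A monochromatic piece as a subgraph of `G`. -/
def mkPiece (G c : SimpleGraph V) (hc : c ≤ G) (U : Finset V) : G.Subgraph where
  verts := ↑U
  Adj u v := c.Adj u v ∧ u ∈ U ∧ v ∈ U
  adj_sub h := hc h.1
  edge_vert h := h.2.1
  symm := ⟨fun _ _ h => ⟨h.1.symm, h.2.2, h.2.1⟩⟩

lemma mkPiece_spanningCoe (G c : SimpleGraph V) (hc : c ≤ G) (U : Finset V) :
    (mkPiece G c hc U).spanningCoe ≤ c := fun _ _ h => h.1

lemma mkPiece_verts (G c : SimpleGraph V) (hc : c ≤ G) (U : Finset V) :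
    (mkPiece G c hc U).verts = ↑U := rfl

/-- Transfer a walk (in a subgraph `e` of the colour `c`) whose support lies in `U` into the
piece, obtaining a walk of the same length. -/
lemma mkPiece_walk {G c e : SimpleGraph V} (hc : c ≤ G) (hce : e ≤ c) {U : Finset V} {a b : V}
    (p : e.Walk a b) (hsup : ∀ z ∈ p.support, z ∈ U) (ha : a ∈ (mkPiece G c hc U).verts)
    (hb : b ∈ (mkPiece G c hc U).verts) :
    ∃ q : (mkPiece G c hc U).coe.Walk ⟨a, ha⟩ ⟨b, hb⟩, q.length = p.length := by
  induction p with
  | nil => exact ⟨SimpleGraph.Walk.nil, rfl⟩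
  | @cons u u' w h q ih =>
    have hu' : u' ∈ U := hsup u' (by rw [SimpleGraph.Walk.support_cons]; exact List.mem_cons_of_mem _ (SimpleGraph.Walk.start_mem_support q))
    have hu'v : u' ∈ (mkPiece G c hc U).verts := hu'
    have huU : u ∈ U := ha
    obtain ⟨q', hq'⟩ := ih (fun z hz => hsup z (by rw [SimpleGraph.Walk.support_cons]; exact List.mem_cons_of_mem _ hz)) hu'v hb
    have hadj : (mkPiece G c hc U).coe.Adj ⟨u, ha⟩ ⟨u', hu'v⟩ := by
      show (mkPiece G c hc U).Adj u u'
      exact ⟨hce h, huU, hu'⟩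
    exact ⟨SimpleGraph.Walk.cons hadj q', by simp [hq']⟩


/-- On a geodesic, there are vertices at every intermediate exact distance. -/
lemma exists_layer {c : SimpleGraph V} :
    ∀ (d : ℕ) (u z : V), c.edist u z = (d : ℕ∞) → ∀ j ≤ d, ∃ y, c.edist u y = (j : ℕ∞) := by
  intro d
  induction d with
  | zero =>
    intro u z h j hj
    interval_cases j
    exact ⟨u, by simp [SimpleGraph.edist_self]⟩
  | succ n ih =>
    intro u z h j hj
    rcases Nat.lt_or_ge j (n + 1) with hlt | hge
    · -- find a vertex at distance exactly n, then use ih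
      have hzu : c.edist z u = ((n+1 : ℕ) : ℕ∞) := by rwa [SimpleGraph.edist_comm]
      obtain ⟨p, hp⟩ := SimpleGraph.exists_walk_of_edist_eq_coe hzu
      cases p with
      | nil => simp at hp
      | @cons _ y _ hadj q =>
        have hql : q.length = n := by
          simpa [SimpleGraph.Walk.length_cons] using hp
        have h1 : c.edist u y ≤ (n : ℕ∞) := by
          have := SimpleGraph.Walk.edist_le q.reverse
          rwa [SimpleGraph.Walk.length_reverse, hql] at this
        have hyz : c.edist y z ≤ 1 := by
          have : c.edist y z = 1 := SimpleGraph.edist_eq_one_iff_adj.mpr hadj.symm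
          exact this.le
        have h2 : ((n+1 : ℕ) : ℕ∞) ≤ c.edist u y + 1 := by
          calc ((n+1 : ℕ) : ℕ∞) = c.edist u z := h.symm
            _ ≤ c.edist u y + c.edist y z := SimpleGraph.edist_triangle
            _ ≤ c.edist u y + 1 := by exact add_le_add_right hyz _
        have hne : c.edist u y ≠ ⊤ := by
          intro ht; rw [ht] at h1; exact (by simp : ¬ ((⊤:ℕ∞) ≤ (n:ℕ∞))) h1
        lift c.edist u y to ℕ using hne with m hm
        have hm1 : m ≤ n := by exact_mod_cast h1
        have hm2 : n + 1 ≤ m + 1 := by exact_mod_cast h2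
        have : m = n := by omega
        subst this
        exact ih u y hm.symm j (by omega)
    · have : j = n + 1 := by omega
      subst this
      exact ⟨z, h⟩


/-- The key deep-case lemma. -/
lemma ball_lemma (Gr A B : SimpleGraph V) (W : Finset V) (K : ℕ) (hK : 1 ≤ K)
    (hAW : ∀ {u v : V}, A.Adj u v → u ∈ W ∧ v ∈ W)
    (hBW : ∀ {u v : V}, B.Adj u v → u ∈ W ∧ v ∈ W)
    (hGadj : ∀ {u v : V}, u ∈ W → v ∈ W → Gr.Adj u v → A.Adj u v ∨ B.Adj u v)
    (hind : ∀ s : Finset V, ↑s ⊆ (W : Set V) →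
      (∀ u ∈ s, ∀ v ∈ s, u ≠ v → ¬ Gr.Adj u v) → s.card ≤ K)
    {u0 z : V} (hdz : A.edist u0 z = ((3 * K^2 : ℕ) : ℕ∞)) :
    ∃ x ∈ W, ∀ s : Finset V, ↑s ⊆ (W : Set V) → s.card = K →
      (∀ u ∈ s, ∀ v ∈ s, u ≠ v → ¬ Gr.Adj u v) →
      ∃ y ∈ s, B.edist x y ≤ ((K^2 + 1 : ℕ) : ℕ∞) := by
  classical
  -- choose vertices at distances 3j for j ≤ K²
  have hy : ∀ j : Fin (K^2 + 1), ∃ y, A.edist u0 y = ((3 * j.1 : ℕ) : ℕ∞) := by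
    intro j
    exact exists_layer (3 * K^2) u0 z hdz (3 * j.1) (by nlinarith [j.2])
  choose f hf using hy
  have hu0W : u0 ∈ W := (ends_mem hAW hdz (by positivity)).1
  have hfW : ∀ j, f j ∈ W := by
    intro j
    rcases Nat.eq_zero_or_pos j.1 with h0 | hpos
    · have : A.edist u0 (f j) = ((0:ℕ) : ℕ∞) := by rw [hf j, h0]
      have : f j = u0 := by
        have h00 : A.edist u0 (f j) = 0 := by simpa using this
        exact (SimpleGraph.edist_eq_zero_iff.mp h00).symm
      rw [this]; exact hu0W
    · have h3 : 0 < 3 * j.1 := by omega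
      exact (ends_mem hAW (hf j) h3).2
  have hfinj : Function.Injective f := by
    intro i j hij
    have : ((3 * i.1 : ℕ) : ℕ∞) = ((3 * j.1 : ℕ) : ℕ∞) := by rw [← hf i, ← hf j, hij]
    have : 3 * i.1 = 3 * j.1 := by exact_mod_cast this
    exact Fin.ext (by omega)
  -- pairwise far in A
  have hfar : ∀ i j : Fin (K^2+1), i ≠ j → ¬ (A.edist (f i) (f j) ≤ 2) := by
    have key : ∀ i j : Fin (K^2+1), A.edist (f i) (f j) ≤ 2 → 3 * j.1 ≤ 3 * i.1 + 2 := by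
      intro i j hle
      have htri : A.edist u0 (f j) ≤ A.edist u0 (f i) + A.edist (f i) (f j) :=
        SimpleGraph.edist_triangle
      rw [hf i, hf j] at htri
      have : ((3 * j.1 : ℕ) : ℕ∞) ≤ ((3 * i.1 + 2 : ℕ) : ℕ∞) := by
        refine le_trans htri ?_
        push_cast
        exact add_le_add_right hle _
      exact_mod_cast this
    intro i j hne hle
    have h1 := key i j hle
    have h2 := key j i (by rwa [SimpleGraph.edist_comm] at hle)
    exact hne (Fin.ext (by omega))
  -- the auxiliary graph on X
  set X : Finset V := Finset.image f Finset.univ with hX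
  have hXcard : X.card = K^2 + 1 := by
    rw [hX, Finset.card_image_of_injective _ hfinj, Finset.card_univ, Fintype.card_fin]
  have hXW : ∀ a ∈ X, a ∈ W := by
    intro a ha
    obtain ⟨j, _, rfl⟩ := Finset.mem_image.mp ha
    exact hfW j
  have hXfar : ∀ a ∈ X, ∀ b ∈ X, a ≠ b → ¬ (A.edist a b ≤ 2) := by
    intro a ha b hb hab
    obtain ⟨i, _, rfl⟩ := Finset.mem_image.mp ha
    obtain ⟨j, _, rfl⟩ := Finset.mem_image.mp hb
    exact hfar i j (fun h => hab (by rw [h]))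
  set Aux : SimpleGraph V := restrict B X with hAux
  set cc : V → Aux.ConnectedComponent := Aux.connectedComponentMk with hcc
  -- at most K components among X
  have himK : (X.image cc).card ≤ K := by
    by_contra hgt
    push_neg at hgt
    have hrep : ∀ t ∈ X.image cc, ∃ a ∈ X, cc a = t := by
      intro t ht; exact Finset.mem_image.mp ht |>.imp (fun a ⟨ha, h⟩ => ⟨ha, h⟩)
    choose rep hrepX hrepcc using hrep
    set s1 : Finset V := (X.image cc).attach.image (fun t => rep t.1 t.2) with hs1
    have hs1inj : ∀ t1 : {x // x ∈ X.image cc}, ∀ t2 : {x // x ∈ X.image cc},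
        rep t1.1 t1.2 = rep t2.1 t2.2 → t1 = t2 := by
      intro t1 t2 h
      have : cc (rep t1.1 t1.2) = cc (rep t2.1 t2.2) := by rw [h]
      rw [hrepcc, hrepcc] at this
      exact Subtype.ext this
    have hs1card : s1.card = (X.image cc).card := by
      rw [hs1, Finset.card_image_of_injective _ (fun t1 t2 h => hs1inj t1 t2 h),
        Finset.card_attach]
    have hs1X : ∀ a ∈ s1, a ∈ X := by
      intro a ha
      obtain ⟨t, _, rfl⟩ := Finset.mem_image.mp ha
      exact hrepX t.1 t.2
    have hs1ind : ∀ u ∈ s1, ∀ v ∈ s1, u ≠ v → ¬ Gr.Adj u v := by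
      intro u hu v hv huv hadj
      obtain ⟨t1, ht1, rfl⟩ := Finset.mem_image.mp hu
      obtain ⟨t2, ht2, rfl⟩ := Finset.mem_image.mp hv
      have huX := hrepX t1.1 t1.2
      have hvX := hrepX t2.1 t2.2
      rcases hGadj (hXW _ huX) (hXW _ hvX) hadj with hA | hB
      · have : A.edist (rep t1.1 t1.2) (rep t2.1 t2.2) = 1 :=
          SimpleGraph.edist_eq_one_iff_adj.mpr hA
        exact hXfar _ huX _ hvX huv (by rw [this]; norm_num)
      · have hAuxAdj : Aux.Adj (rep t1.1 t1.2) (rep t2.1 t2.2) := ⟨hB, huX, hvX⟩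
        have : cc (rep t1.1 t1.2) = cc (rep t2.1 t2.2) :=
          SimpleGraph.ConnectedComponent.eq.mpr hAuxAdj.reachable
        rw [hrepcc, hrepcc] at this
        exact huv (congrArg (fun (t : {x // x ∈ X.image cc}) => rep t.1 t.2) (Subtype.ext this))
    have := hind s1 (fun a ha => Finset.mem_coe.mpr (hXW _ (hs1X a (Finset.mem_coe.mp ha)))) hs1ind
    omega
  -- pigeonhole: a large fibre Y
  have hpig : ∃ t ∈ X.image cc, K < (X.filter (fun a => cc a = t)).card := by
    apply Finset.exists_lt_card_fiber_of_mul_lt_card_of_maps_to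
    · intro a ha; exact Finset.mem_image_of_mem cc ha
    · calc (X.image cc).card * K ≤ K * K := by
            exact Nat.mul_le_mul_right K himK
        _ < K^2 + 1 := by nlinarith
        _ = X.card := hXcard.symm
  obtain ⟨t, _, hYcard⟩ := hpig
  set Y : Finset V := X.filter (fun a => cc a = t) with hY
  have hYX : ∀ a ∈ Y, a ∈ X := fun a ha => (Finset.mem_filter.mp ha).1
  have hYcc : ∀ a ∈ Y, cc a = t := fun a ha => (Finset.mem_filter.mp ha).2
  have hYne : Y.Nonempty := Finset.card_pos.mp (by omega)
  obtain ⟨x, hxY⟩ := hYne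
  -- everything in Y is B-close to x
  have hclose : ∀ w ∈ Y, B.edist x w ≤ ((K^2 : ℕ) : ℕ∞) := by
    intro w hw
    have hreach : Aux.Reachable x w := by
      apply SimpleGraph.ConnectedComponent.eq.mp
      show cc x = cc w
      rw [hYcc x hxY, hYcc w hw]
    obtain ⟨p0⟩ := hreach
    set p := p0.bypass with hp
    have hpath : p.IsPath := SimpleGraph.Walk.bypass_isPath p0
    have hAuxW : ∀ {u v : V}, Aux.Adj u v → u ∈ X ∧ v ∈ X := by
      intro u v h
      have h' : B.Adj u v ∧ u ∈ X ∧ v ∈ X := h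
      exact ⟨h'.2.1, h'.2.2⟩
    have hsupX : ∀ z ∈ p.support, z ∈ X :=
      walk_support_mem hAuxW p (hYX x hxY)
    have hlen : p.length ≤ K^2 := by
      have hnodup : p.support.Nodup := hpath.support_nodup
      have hsub : p.support.toFinset ⊆ X := by
        intro a ha; exact hsupX a (List.mem_toFinset.mp ha)
      have hcard : p.support.toFinset.card = p.length + 1 := by
        rw [List.toFinset_card_of_nodup hnodup, SimpleGraph.Walk.length_support]
      have := Finset.card_le_card hsub
      rw [hcard, hXcard] at this
      omega
    calc B.edist x w ≤ Aux.edist x w := SimpleGraph.edist_anti (restrict_le B X)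
      _ ≤ (p.length : ℕ∞) := SimpleGraph.Walk.edist_le p
      _ ≤ ((K^2 : ℕ) : ℕ∞) := Nat.cast_le.mpr hlen
  refine ⟨x, hXW x (hYX x hxY), ?_⟩
  -- the hitting property
  intro s hsW hscard hsind
  by_contra hno
  push_neg at hno
  replace hno : ∀ y ∈ s, ¬ (B.edist x y ≤ ((K^2+1:ℕ) : ℕ∞)) := fun y hy => not_le.mpr (hno y hy)
  -- each w in Y has an A-neighbour in s
  have hstep : ∀ w ∈ Y, ∃ κ ∈ s, A.Adj w κ := by
    intro w hw
    have hwW : w ∈ W := hXW w (hYX w hw)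
    have hwball : B.edist x w ≤ ((K^2+1 : ℕ) : ℕ∞) :=
      le_trans (hclose w hw) (Nat.cast_le.mpr (by omega))
    have hws : w ∉ s := fun hmem => hno w hmem hwball
    have hGr : ∃ κ ∈ s, Gr.Adj w κ := by
      by_contra hnone
      push_neg at hnone
      have hins : (insert w s).card = K + 1 := by
        rw [Finset.card_insert_of_notMem hws, hscard]
      have hinsW : ↑(insert w s) ⊆ (W : Set V) := by
        intro a ha
        rw [Finset.coe_insert, Set.mem_insert_iff] at ha
        rcases ha with rfl | ha
        · exact hwW
        · exact hsW ha
      have hinsind : ∀ u ∈ insert w s, ∀ v ∈ insert w s, u ≠ v → ¬ Gr.Adj u v := by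
        intro u hu v hv huv
        rcases Finset.mem_insert.mp hu with rfl | hu' <;>
          rcases Finset.mem_insert.mp hv with rfl | hv'
        · exact absurd rfl huv
        · exact hnone v hv'
        · exact fun h => hnone u hu' h.symm
        · exact hsind u hu' v hv' huv
      have := hind _ hinsW hinsind
      omega
    obtain ⟨κ, hκs, hκadj⟩ := hGr
    refine ⟨κ, hκs, ?_⟩
    rcases hGadj hwW (hsW hκs) hκadj with hA | hB
    · exact hA
    · exfalso
      have : B.edist x κ ≤ ((K^2+1 : ℕ) : ℕ∞) := by
        calc B.edist x κ ≤ B.edist x w + B.edist w κ := SimpleGraph.edist_triangle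
          _ ≤ ((K^2 : ℕ) : ℕ∞) + 1 := by
              refine add_le_add (hclose w hw) ?_
              exact le_of_eq (SimpleGraph.edist_eq_one_iff_adj.mpr hB)
          _ = ((K^2+1 : ℕ) : ℕ∞) := by push_cast; ring
      exact (hno κ hκs) this
  choose κf hκs hκadj using hstep
  set κ : V → V := fun w => if h : w ∈ Y then κf w h else w with hκ
  have hκs' : ∀ w ∈ Y, κ w ∈ s := by
    intro w hw; simp only [hκ, dif_pos hw]; exact hκs w hw
  have hκadj' : ∀ w ∈ Y, A.Adj w (κ w) := by
    intro w hw; simp only [hκ, dif_pos hw]; exact hκadj w hw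
  have hinjOn : Set.InjOn κ ↑Y := by
    intro w1 hw1 w2 hw2 heq
    by_contra hne
    have hw1Y : w1 ∈ Y := Finset.mem_coe.mp hw1
    have hw2Y : w2 ∈ Y := Finset.mem_coe.mp hw2
    have h1 : A.edist w1 (κ w1) ≤ 1 :=
      le_of_eq (SimpleGraph.edist_eq_one_iff_adj.mpr (hκadj' w1 hw1Y))
    have h2 : A.edist (κ w1) w2 ≤ 1 := by
      rw [heq, SimpleGraph.edist_comm]
      exact le_of_eq (SimpleGraph.edist_eq_one_iff_adj.mpr (hκadj' w2 hw2Y))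
    have hle2 : A.edist w1 w2 ≤ 2 := by
      calc A.edist w1 w2 ≤ A.edist w1 (κ w1) + A.edist (κ w1) w2 := SimpleGraph.edist_triangle
        _ ≤ 1 + 1 := add_le_add h1 h2
        _ = 2 := by norm_num
    exact hXfar w1 (hYX w1 hw1Y) w2 (hYX w2 hw2Y) hne hle2
  have hcard := Finset.card_le_card_of_injOn κ (fun w hw => hκs' w hw) hinjOn
  rw [hscard] at hcard
  omega


/-- The deep-case step: produce a single piece (of the opposite colour `d`) of bounded
diameter that meets every independent set of size `K` inside `W`. -/
lemma deep_step (G c d : SimpleGraph V) (hcG : c ≤ G) (hdG : d ≤ G)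
    (hsup : ∀ {u v : V}, G.Adj u v → c.Adj u v ∨ d.Adj u v)
    (W : Finset V) (K : ℕ) (hK : 1 ≤ K)
    (hind : ∀ s : Finset V, ↑s ⊆ (W : Set V) →
      (∀ u ∈ s, ∀ v ∈ s, u ≠ v → ¬ G.Adj u v) → s.card ≤ K)
    (hdeep : ∃ u z : V, (restrict c W).edist u z ≠ ⊤ ∧
      ((3*K^2 : ℕ) : ℕ∞) ≤ (restrict c W).edist u z) :
    ∃ (Bl : Finset V) (P : G.Subgraph), Bl ⊆ W ∧ P.verts = ↑Bl ∧ P.spanningCoe ≤ d ∧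
      (∀ u v : P.verts, P.coe.edist u v ≤ ((8*K^2+12*K+4 : ℕ) : ℕ∞)) ∧
      (∀ s : Finset V, ↑s ⊆ (W : Set V) → s.card = K →
        (∀ u ∈ s, ∀ v ∈ s, u ≠ v → ¬ G.Adj u v) → ∃ y ∈ s, y ∈ Bl) := by
  classical
  set A := restrict c W with hA
  set B := restrict d W with hB
  have hAW : ∀ {u v : V}, A.Adj u v → u ∈ W ∧ v ∈ W := fun h => ⟨h.2.1, h.2.2⟩
  have hBW : ∀ {u v : V}, B.Adj u v → u ∈ W ∧ v ∈ W := fun h => ⟨h.2.1, h.2.2⟩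
  have hGadj : ∀ {u v : V}, u ∈ W → v ∈ W → G.Adj u v → A.Adj u v ∨ B.Adj u v := by
    intro u v hu hv hadj
    rcases hsup hadj with h | h
    · exact Or.inl ⟨h, hu, hv⟩
    · exact Or.inr ⟨h, hu, hv⟩
  obtain ⟨u, z0, hne, hge⟩ := hdeep

  lift A.edist u z0 to ℕ using hne with n hn
  have hge' : 3*K^2 ≤ n := by exact_mod_cast hge
  obtain ⟨z, hz⟩ := exists_layer n u z0 hn.symm (3*K^2) hge'
  obtain ⟨x, hxW, hhit⟩ := ball_lemma G A B W K hK hAW hBW hGadj hind hz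
  set Bl : Finset V := W.filter (fun y => B.edist x y ≤ ((K^2+1 : ℕ) : ℕ∞)) with hBl
  have hBlW : Bl ⊆ W := Finset.filter_subset _ _
  have hxBl : x ∈ Bl := by
    rw [hBl, Finset.mem_filter]
    exact ⟨hxW, by rw [SimpleGraph.edist_self]; exact zero_le⟩
  refine ⟨Bl, mkPiece G d hdG Bl, hBlW, rfl, mkPiece_spanningCoe G d hdG Bl, ?_, ?_⟩
  · -- diameter bound
    have key : ∀ w (hw : w ∈ Bl), (mkPiece G d hdG Bl).coe.edist ⟨x, hxBl⟩ ⟨w, hw⟩ ≤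
        ((K^2+1 : ℕ) : ℕ∞) := by
      intro w hw
      have hwball : B.edist x w ≤ ((K^2+1 : ℕ) : ℕ∞) := (Finset.mem_filter.mp hw).2
      have hne' : B.edist x w ≠ ⊤ := by
        intro ht
        rw [ht, top_le_iff] at hwball
        exact ENat.coe_ne_top _ hwball
      obtain ⟨p, hp⟩ := (SimpleGraph.reachable_of_edist_ne_top hne').exists_walk_length_eq_edist
      have hplen : (p.length : ℕ∞) ≤ ((K^2+1 : ℕ) : ℕ∞) := by rw [hp]; exact hwball
      have hsupBl : ∀ z' ∈ p.support, z' ∈ Bl := by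
        intro z' hz'
        rw [hBl, Finset.mem_filter]
        constructor
        · exact walk_support_mem hBW p hxW z' hz'
        · exact le_trans (le_trans (edist_of_mem_support p hz') hplen) le_rfl
      obtain ⟨q, hq⟩ := mkPiece_walk hdG (restrict_le d W) p hsupBl hxBl hw
      calc (mkPiece G d hdG Bl).coe.edist ⟨x, hxBl⟩ ⟨w, hw⟩ ≤ (q.length : ℕ∞) :=
            SimpleGraph.Walk.edist_le q
        _ = (p.length : ℕ∞) := by rw [hq]
        _ ≤ ((K^2+1 : ℕ) : ℕ∞) := hplen
    rintro ⟨u1, hu1⟩ ⟨v1, hv1⟩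
    have hu1' : u1 ∈ Bl := hu1
    have hv1' : v1 ∈ Bl := hv1
    calc (mkPiece G d hdG Bl).coe.edist ⟨u1, hu1⟩ ⟨v1, hv1⟩ ≤
        (mkPiece G d hdG Bl).coe.edist ⟨u1, hu1⟩ ⟨x, hxBl⟩ +
        (mkPiece G d hdG Bl).coe.edist ⟨x, hxBl⟩ ⟨v1, hv1⟩ := SimpleGraph.edist_triangle
      _ ≤ ((K^2+1 : ℕ) : ℕ∞) + ((K^2+1 : ℕ) : ℕ∞) := by
          refine add_le_add ?_ (key v1 hv1')
          rw [SimpleGraph.edist_comm]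
          exact key u1 hu1'
      _ = ((2*K^2+2 : ℕ) : ℕ∞) := by push_cast; ring
      _ ≤ ((8*K^2+12*K+4 : ℕ) : ℕ∞) := by
          rw [Nat.cast_le]; nlinarith
  · -- hitting
    intro s hsW hscard hsind
    obtain ⟨y, hys, hyd⟩ := hhit s hsW hscard hsind
    refine ⟨y, hys, ?_⟩
    rw [hBl, Finset.mem_filter]
    exact ⟨hsW hys, hyd⟩


/-- A piece on a set `U` that is connected (within the restricted colour graph) and
closed under reachability has diameter bounded by the shallowness bound. -/
lemma piece_diam_of (G c : SimpleGraph V) (hc : c ≤ G) (W U : Finset V) (D : ℕ)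
    (hsh : ∀ u v : V, (restrict c W).edist u v ≠ ⊤ →
      (restrict c W).edist u v ≤ (D : ℕ∞))
    (hUW : ∀ u ∈ U, u ∈ W)
    (hUconn : ∀ u ∈ U, ∀ v ∈ U, (restrict c W).Reachable u v)
    (hUclosed : ∀ u ∈ U, ∀ z ∈ W, (restrict c W).Reachable u z → z ∈ U) :
    ∀ u v : (mkPiece G c hc U).verts, (mkPiece G c hc U).coe.edist u v ≤ (D : ℕ∞) := by
  rintro ⟨u, hu⟩ ⟨v, hv⟩
  have huF : u ∈ U := hu
  have hvF : v ∈ U := hv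
  have huW : u ∈ W := hUW u huF
  have hreach : (restrict c W).Reachable u v := hUconn u huF v hvF
  have hne : (restrict c W).edist u v ≠ ⊤ := SimpleGraph.edist_ne_top_iff_reachable.mpr hreach
  obtain ⟨p, hp⟩ := hreach.exists_walk_length_eq_edist
  have hplen : (p.length : ℕ∞) ≤ (D : ℕ∞) := by rw [hp]; exact hsh u v hne
  have hAW : ∀ {a b : V}, (restrict c W).Adj a b → a ∈ W ∧ b ∈ W := fun h => ⟨h.2.1, h.2.2⟩
  have hsupF : ∀ z ∈ p.support, z ∈ U := by
    intro z hz
    exact hUclosed u huF z (walk_support_mem hAW p huW z hz) ⟨p.takeUntil z hz⟩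
  obtain ⟨q, hq⟩ := mkPiece_walk hc (restrict_le c W) p hsupF hu hv
  calc (mkPiece G c hc U).coe.edist ⟨u, hu⟩ ⟨v, hv⟩ ≤ (q.length : ℕ∞) :=
        SimpleGraph.Walk.edist_le q
    _ = (p.length : ℕ∞) := by rw [hq]
    _ ≤ (D : ℕ∞) := hplen

/-- Shallow case: cover `W` by at most `K` monochromatic components (König's theorem via Hall). -/
lemma shallow_cover (G red blue : SimpleGraph V) (hr : red ≤ G) (hb : blue ≤ G)
    (hsup : ∀ {u v : V}, G.Adj u v → red.Adj u v ∨ blue.Adj u v)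
    (W : Finset V) (K : ℕ)
    (hind : ∀ s : Finset V, ↑s ⊆ (W : Set V) →
      (∀ u ∈ s, ∀ v ∈ s, u ≠ v → ¬ G.Adj u v) → s.card ≤ K)
    (hshr : ∀ u v : V, (restrict red W).edist u v ≠ ⊤ →
      (restrict red W).edist u v ≤ ((3*K^2 : ℕ) : ℕ∞))
    (hshb : ∀ u v : V, (restrict blue W).edist u v ≠ ⊤ →
      (restrict blue W).edist u v ≤ ((3*K^2 : ℕ) : ℕ∞)) :
    ∃ 𝒞 : Finset G.Subgraph, 𝒞.card ≤ K ∧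
      (∀ H ∈ 𝒞, H.spanningCoe ≤ red ∨ H.spanningCoe ≤ blue) ∧
      (∀ H ∈ 𝒞, ∀ u v : H.verts, H.coe.edist u v ≤ ((8*K^2+12*K+4 : ℕ) : ℕ∞)) ∧
      (∀ v ∈ W, ∃ H ∈ 𝒞, v ∈ H.verts) := by
  have hAW : ∀ {a b : V}, (restrict red W).Adj a b → a ∈ W ∧ b ∈ W := fun h => ⟨h.2.1, h.2.2⟩
  have hBW : ∀ {a b : V}, (restrict blue W).Adj a b → a ∈ W ∧ b ∈ W := fun h => ⟨h.2.1, h.2.2⟩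
  let rc : V → (restrict red W).ConnectedComponent := (restrict red W).connectedComponentMk
  let bc : V → (restrict blue W).ConnectedComponent := (restrict blue W).connectedComponentMk
  let R : Finset (restrict red W).ConnectedComponent := W.image rc
  let NS : Finset (restrict red W).ConnectedComponent →
      Finset (restrict blue W).ConnectedComponent :=
    fun S => (W.filter (fun v => rc v ∈ S)).image bc
  -- choose the maximizer of the defect
  obtain ⟨Sm, hSmR, hSmax⟩ := Finset.exists_max_image R.powerset
    (fun S => (S.card : ℤ) - ((NS S).card : ℤ)) ⟨∅, Finset.mem_powerset.mpr (Finset.empty_subset R)⟩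
  rw [Finset.mem_powerset] at hSmR
  have hNSempty : NS (∅ : Finset (restrict red W).ConnectedComponent) = ∅ := by
    simp [NS]
  have hd0 : ((NS Sm).card : ℤ) ≤ (Sm.card : ℤ) := by
    have h0' : (((∅ : Finset (restrict red W).ConnectedComponent).card : ℤ) -
        ((NS ∅).card : ℤ)) ≤ (Sm.card : ℤ) - ((NS Sm).card : ℤ) :=
      hSmax ∅ (Finset.mem_powerset.mpr (Finset.empty_subset R))
    rw [hNSempty] at h0'
    simp at h0'
    omega
  set d : ℕ := Sm.card - (NS Sm).card with hdd
  have hdZ : (d : ℤ) = (Sm.card : ℤ) - ((NS Sm).card : ℤ) := by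
    rw [hdd]; push_cast [Nat.cast_sub (by exact_mod_cast hd0)]; ring
  have hdefect : ∀ S : Finset (restrict red W).ConnectedComponent, S ⊆ R →
      (S.card : ℤ) - ((NS S).card : ℤ) ≤ d := by
    intro S hS
    rw [hdZ]
    exact hSmax S (Finset.mem_powerset.mpr hS)
  -- Hall's theorem with d dummy targets
  let β := (restrict blue W).ConnectedComponent ⊕ Fin d
  let t : {r // r ∈ R} → Finset β :=
    fun r => ((NS {r.1}).image Sum.inl) ∪ ((Finset.univ : Finset (Fin d)).image Sum.inr)
  have hhall : ∀ s : Finset {r // r ∈ R}, s.card ≤ (s.biUnion t).card := by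
    intro s
    rcases s.eq_empty_or_nonempty with rfl | hsne
    · simp
    · have hbi : s.biUnion t =
          ((NS (s.image Subtype.val)).image Sum.inl) ∪
          ((Finset.univ : Finset (Fin d)).image Sum.inr) := by
        ext x
        simp only [Finset.mem_biUnion, Finset.mem_union, t]
        constructor
        · rintro ⟨r, hrs, hx⟩
          rcases hx with hx | hx
          · left
            obtain ⟨b, hb, rfl⟩ := Finset.mem_image.mp hx
            obtain ⟨v, hv, rfl⟩ := Finset.mem_image.mp hb
            rw [Finset.mem_filter] at hv
            refine Finset.mem_image.mpr ⟨bc v, Finset.mem_image.mpr ⟨v, ?_, rfl⟩, rfl⟩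
            rw [Finset.mem_filter]
            exact ⟨hv.1, Finset.mem_image.mpr ⟨r, hrs, (Finset.mem_singleton.mp hv.2).symm⟩⟩
          · right; exact hx
        · rintro (hx | hx)
          · obtain ⟨b, hb, rfl⟩ := Finset.mem_image.mp hx
            obtain ⟨v, hv, rfl⟩ := Finset.mem_image.mp hb
            rw [Finset.mem_filter] at hv
            obtain ⟨r, hrs, hrv⟩ := Finset.mem_image.mp hv.2
            refine ⟨r, hrs, Or.inl ?_⟩
            refine Finset.mem_image.mpr ⟨bc v, ?_, rfl⟩
            refine Finset.mem_image.mpr ⟨v, ?_, rfl⟩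
            rw [Finset.mem_filter]
            exact ⟨hv.1, by rw [Finset.mem_singleton, hrv]⟩
          · obtain ⟨j, _, rfl⟩ := Finset.mem_image.mp hx
            obtain ⟨r, hrs⟩ := hsne
            exact ⟨r, hrs, Or.inr (Finset.mem_image.mpr ⟨j, Finset.mem_univ j, rfl⟩)⟩
      rw [hbi]
      have hdisj : Disjoint ((NS (s.image Subtype.val)).image Sum.inl)
          ((Finset.univ : Finset (Fin d)).image Sum.inr) := by
        rw [Finset.disjoint_left]
        rintro x hx hx'
        obtain ⟨b, _, rfl⟩ := Finset.mem_image.mp hx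
        obtain ⟨j, _, hj⟩ := Finset.mem_image.mp hx'
        exact Sum.inl_ne_inr hj.symm
      rw [Finset.card_union_of_disjoint hdisj,
        Finset.card_image_of_injective _ Sum.inl_injective,
        Finset.card_image_of_injective _ Sum.inr_injective, Finset.card_univ, Fintype.card_fin]
      have hsub : s.image Subtype.val ⊆ R := by
        intro r hrim
        obtain ⟨r', _, rfl⟩ := Finset.mem_image.mp hrim
        exact r'.2
      have hcardim : (s.image Subtype.val).card = s.card :=
        Finset.card_image_of_injective _ Subtype.val_injective
      have := hdefect _ hsub
      rw [hcardim] at this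
      omega
  obtain ⟨f, hfinj, hft⟩ := (Finset.all_card_le_biUnion_card_iff_exists_injective t).mp hhall
  -- the matched part
  let Mr : Finset {r // r ∈ R} := Finset.univ.filter (fun r => ∃ b, f r = Sum.inl b)
  have hMrcard : (R.card : ℤ) - d ≤ Mr.card := by
    have hcompl : (Finset.univ.filter (fun r : {r // r ∈ R} => ¬ ∃ b, f r = Sum.inl b)).card ≤ d := by
      have hmap : ∀ r ∈ Finset.univ.filter (fun r : {r // r ∈ R} => ¬ ∃ b, f r = Sum.inl b),
          f r ∈ (Finset.univ : Finset (Fin d)).image Sum.inr := by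
        intro r hrf
        rw [Finset.mem_filter] at hrf
        rcases hx : f r with b | j
        · exact absurd ⟨b, hx⟩ hrf.2
        · exact Finset.mem_image.mpr ⟨j, Finset.mem_univ j, rfl⟩
      calc (Finset.univ.filter (fun r : {r // r ∈ R} => ¬ ∃ b, f r = Sum.inl b)).card
          ≤ ((Finset.univ : Finset (Fin d)).image Sum.inr).card :=
            Finset.card_le_card_of_injOn f hmap (fun a _ b _ h => hfinj h)
        _ ≤ d := by
            rw [Finset.card_image_of_injective _ Sum.inr_injective, Finset.card_univ,
              Fintype.card_fin]
    have hsplit : Mr.card + (Finset.univ.filter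
        (fun r : {r // r ∈ R} => ¬ ∃ b, f r = Sum.inl b)).card = R.card := by
      rw [Finset.card_filter_add_card_filter_not]
      · exact (Fintype.card_coe R)
    omega
  -- build an independent set from the matched part
  have hsel : ∀ r : {r // r ∈ R}, r ∈ Mr → ∃ v ∈ W, rc v = r.1 ∧ Sum.inl (bc v) = f r := by
    intro r hrM
    rw [Finset.mem_filter] at hrM
    obtain ⟨b, hb⟩ := hrM.2
    have := hft r
    rw [hb] at this
    rcases Finset.mem_union.mp this with hx | hx
    · obtain ⟨b', hb', hbb⟩ := Finset.mem_image.mp hx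
      obtain ⟨v, hv, rfl⟩ := Finset.mem_image.mp hb'
      rw [Finset.mem_filter] at hv
      refine ⟨v, hv.1, ?_, ?_⟩
      · have := hv.2; rwa [Finset.mem_singleton] at this
      · rw [hb, ← hbb]
    · obtain ⟨j, _, hj⟩ := Finset.mem_image.mp hx
      exact absurd hj Sum.inr_ne_inl
  choose vm hvmW hvmrc hvmbc using hsel
  have hMK : (Mr.card : ℤ) ≤ K := by
    have hinj2 : ∀ r1 : {r // r ∈ R}, ∀ h1 : r1 ∈ Mr, ∀ r2 : {r // r ∈ R}, ∀ h2 : r2 ∈ Mr,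
        vm r1 h1 = vm r2 h2 → r1 = r2 := by
      intro r1 h1 r2 h2 heq
      have : rc (vm r1 h1) = rc (vm r2 h2) := by rw [heq]
      rw [hvmrc r1 h1, hvmrc r2 h2] at this
      exact Subtype.ext this
    set s0 : Finset V := Mr.attach.image (fun r => vm r.1 r.2) with hs0
    have hs0card : s0.card = Mr.card := by
      rw [hs0, Finset.card_image_of_injective _ (fun r1 r2 h =>
        Subtype.ext (hinj2 r1.1 r1.2 r2.1 r2.2 h)), Finset.card_attach]
    have hs0W : ↑s0 ⊆ (W : Set V) := by
      intro a ha
      rw [Finset.mem_coe, hs0] at ha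
      obtain ⟨r, _, rfl⟩ := Finset.mem_image.mp ha
      exact hvmW r.1 r.2
    have hs0ind : ∀ u ∈ s0, ∀ v ∈ s0, u ≠ v → ¬ G.Adj u v := by
      intro u hu v hv huv hadj
      rw [hs0] at hu hv
      obtain ⟨r1, _, rfl⟩ := Finset.mem_image.mp hu
      obtain ⟨r2, _, rfl⟩ := Finset.mem_image.mp hv
      have huW := hvmW r1.1 r1.2
      have hvW := hvmW r2.1 r2.2
      have hr12 : r1.1 ≠ r2.1 := fun h => huv (by
        have : r1 = r2 := Subtype.ext h
        rw [this])
      rcases hsup hadj with h | h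
      · have : (restrict red W).Adj (vm r1.1 r1.2) (vm r2.1 r2.2) := ⟨h, huW, hvW⟩
        have : rc (vm r1.1 r1.2) = rc (vm r2.1 r2.2) :=
          SimpleGraph.ConnectedComponent.eq.mpr this.reachable
        rw [hvmrc r1.1 r1.2, hvmrc r2.1 r2.2] at this
        exact hr12 (Subtype.ext this)
      · have : (restrict blue W).Adj (vm r1.1 r1.2) (vm r2.1 r2.2) := ⟨h, huW, hvW⟩
        have hbceq : bc (vm r1.1 r1.2) = bc (vm r2.1 r2.2) :=
          SimpleGraph.ConnectedComponent.eq.mpr this.reachable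
        have : f r1.1 = f r2.1 := by
          rw [← hvmbc r1.1 r1.2, ← hvmbc r2.1 r2.2, hbceq]
        exact hr12 (Subtype.ext (congrArg Subtype.val (hfinj this)))
    have := hind s0 hs0W hs0ind
    rw [hs0card] at this
    exact_mod_cast this
  -- total budget
  have hbudget : ((R \ Sm).card : ℤ) + ((NS Sm).card : ℤ) ≤ K := by
    have h1 : (R \ Sm).card = R.card - Sm.card := Finset.card_sdiff_of_subset hSmR
    have h2 : Sm.card ≤ R.card := Finset.card_le_card hSmR
    have h3 : (NS Sm).card ≤ Sm.card := by exact_mod_cast hd0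
    have h4 := hMrcard
    have h5 := hMK
    omega
  -- the covering family
  let pieceR : (restrict red W).ConnectedComponent → G.Subgraph :=
    fun r => mkPiece G red hr (W.filter (fun v => rc v = r))
  let pieceB : (restrict blue W).ConnectedComponent → G.Subgraph :=
    fun b => mkPiece G blue hb (W.filter (fun v => bc v = b))
  refine ⟨((R \ Sm).image pieceR) ∪ ((NS Sm).image pieceB), ?_, ?_, ?_, ?_⟩
  · have h1 := Finset.card_union_le ((R \ Sm).image pieceR) ((NS Sm).image pieceB)
    have h2 := Finset.card_image_le (s := R \ Sm) (f := pieceR)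
    have h3 := Finset.card_image_le (s := NS Sm) (f := pieceB)
    omega
  · intro H hH
    rcases Finset.mem_union.mp hH with hH | hH
    · obtain ⟨r, _, rfl⟩ := Finset.mem_image.mp hH
      exact Or.inl (mkPiece_spanningCoe G red hr _)
    · obtain ⟨b, _, rfl⟩ := Finset.mem_image.mp hH
      exact Or.inr (mkPiece_spanningCoe G blue hb _)
  · intro H hH
    have hDD : ((3*K^2 : ℕ) : ℕ∞) ≤ ((8*K^2+12*K+4 : ℕ) : ℕ∞) := by
      rw [Nat.cast_le]; nlinarith
    rcases Finset.mem_union.mp hH with hH | hH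
    · obtain ⟨r, _, rfl⟩ := Finset.mem_image.mp hH
      have hdiam := piece_diam_of G red hr W (W.filter (fun v => rc v = r)) (3*K^2) hshr
        (fun u hu => (Finset.mem_filter.mp hu).1)
        (fun u hu v hv => SimpleGraph.ConnectedComponent.eq.mp
          (((Finset.mem_filter.mp hu).2).trans ((Finset.mem_filter.mp hv).2).symm))
        (fun u hu z hz hrz => Finset.mem_filter.mpr
          ⟨hz, ((SimpleGraph.ConnectedComponent.eq.mpr hrz).symm).trans (Finset.mem_filter.mp hu).2⟩)
      intro u v
      exact le_trans (hdiam u v) hDD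
    · obtain ⟨b, _, rfl⟩ := Finset.mem_image.mp hH
      have hdiam := piece_diam_of G blue hb W (W.filter (fun v => bc v = b)) (3*K^2) hshb
        (fun u hu => (Finset.mem_filter.mp hu).1)
        (fun u hu v hv => SimpleGraph.ConnectedComponent.eq.mp
          (((Finset.mem_filter.mp hu).2).trans ((Finset.mem_filter.mp hv).2).symm))
        (fun u hu z hz hrz => Finset.mem_filter.mpr
          ⟨hz, ((SimpleGraph.ConnectedComponent.eq.mpr hrz).symm).trans (Finset.mem_filter.mp hu).2⟩)
      intro u v
      exact le_trans (hdiam u v) hDD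
  · intro v hv
    by_cases hvS : rc v ∈ Sm
    · refine ⟨pieceB (bc v), Finset.mem_union_right _ (Finset.mem_image_of_mem _ ?_), ?_⟩
      · exact Finset.mem_image.mpr ⟨v, Finset.mem_filter.mpr ⟨hv, hvS⟩, rfl⟩
      · show v ∈ (W.filter (fun u => bc u = bc v) : Finset V)
        exact Finset.mem_filter.mpr ⟨hv, rfl⟩
    · refine ⟨pieceR (rc v), Finset.mem_union_left _ (Finset.mem_image_of_mem _ ?_), ?_⟩
      · exact Finset.mem_sdiff.mpr ⟨Finset.mem_image_of_mem rc hv, hvS⟩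
      · show v ∈ (W.filter (fun u => rc u = rc v) : Finset V)
        exact Finset.mem_filter.mpr ⟨hv, rfl⟩


/-- Main recursion. -/
lemma master (G red blue : SimpleGraph V) (hcol : red ⊔ blue = G) :
    ∀ (k : ℕ) (W : Finset V),
      (∀ s : Finset V, ↑s ⊆ (W : Set V) →
        (∀ u ∈ s, ∀ v ∈ s, u ≠ v → ¬ G.Adj u v) → s.card ≤ k) →
      ∃ 𝒞 : Finset G.Subgraph, 𝒞.card ≤ k ∧
        (∀ H ∈ 𝒞, H.spanningCoe ≤ red ∨ H.spanningCoe ≤ blue) ∧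
        (∀ H ∈ 𝒞, ∀ u v : H.verts, H.coe.edist u v ≤ ((8*k^2+12*k+4 : ℕ) : ℕ∞)) ∧
        (∀ v ∈ W, ∃ H ∈ 𝒞, v ∈ H.verts) := by
  have hr : red ≤ G := hcol ▸ le_sup_left
  have hb : blue ≤ G := hcol ▸ le_sup_right
  have hsup : ∀ {u v : V}, G.Adj u v → red.Adj u v ∨ blue.Adj u v := by
    intro u v h; rw [← hcol] at h; exact h
  intro k
  induction k with
  | zero =>
    intro W hind
    refine ⟨∅, by simp, by simp, by simp, ?_⟩
    intro v hv
    exfalso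
    have h1 := hind {v} (by simp [hv]) ?_
    · simp at h1
    · intro u hu w hw huw
      rw [Finset.mem_singleton] at hu hw
      subst hu; subst hw; exact absurd rfl huw
  | succ n ih =>
    intro W hind
    have hmono : ((8*n^2+12*n+4 : ℕ) : ℕ∞) ≤ ((8*(n+1)^2+12*(n+1)+4 : ℕ) : ℕ∞) := by
      rw [Nat.cast_le]; nlinarith
    by_cases hdr : ∃ u z : V, (restrict red W).edist u z ≠ ⊤ ∧
        ((3*(n+1)^2 : ℕ) : ℕ∞) ≤ (restrict red W).edist u z
    · obtain ⟨Bl, P, hBlW, hPverts, hPspan, hPdiam, hPhit⟩ :=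
        deep_step G red blue hr hb hsup W (n+1) (by omega) hind hdr
      have hind' : ∀ s : Finset V, ↑s ⊆ ((W \ Bl : Finset V) : Set V) →
          (∀ u ∈ s, ∀ v ∈ s, u ≠ v → ¬ G.Adj u v) → s.card ≤ n := by
        intro s hs hsind
        by_contra hgt
        push_neg at hgt
        obtain ⟨s', hs's, hs'card⟩ := Finset.exists_subset_card_eq (s := s) (n := n+1) (by omega)
        have hs'W : ↑s' ⊆ (W : Set V) := by
          intro a ha
          have := hs (Finset.mem_coe.mpr (hs's (Finset.mem_coe.mp ha)))
          rw [Finset.mem_coe, Finset.mem_sdiff] at this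
          exact Finset.mem_coe.mpr this.1
        obtain ⟨y, hys', hyBl⟩ := hPhit s' hs'W hs'card
          (fun u hu v hv huv => hsind u (hs's hu) v (hs's hv) huv)
        have := hs (Finset.mem_coe.mpr (hs's hys'))
        rw [Finset.mem_coe, Finset.mem_sdiff] at this
        exact this.2 hyBl
      obtain ⟨𝒞', h𝒞'card, h𝒞'mono, h𝒞'diam, h𝒞'cov⟩ := ih (W \ Bl) hind'
      refine ⟨insert P 𝒞', ?_, ?_, ?_, ?_⟩
      · calc (insert P 𝒞').card ≤ 𝒞'.card + 1 := Finset.card_insert_le _ _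
          _ ≤ n + 1 := by omega
      · intro H hH
        rcases Finset.mem_insert.mp hH with rfl | hH
        · exact Or.inr hPspan
        · exact h𝒞'mono H hH
      · intro H hH
        rcases Finset.mem_insert.mp hH with rfl | hH
        · exact hPdiam
        · intro u v; exact le_trans (h𝒞'diam H hH u v) hmono
      · intro v hv
        by_cases hvBl : v ∈ Bl
        · refine ⟨P, Finset.mem_insert_self _ _, ?_⟩
          rw [hPverts]; exact Finset.mem_coe.mpr hvBl
        · obtain ⟨H, hH, hvH⟩ := h𝒞'cov v (Finset.mem_sdiff.mpr ⟨hv, hvBl⟩)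
          exact ⟨H, Finset.mem_insert_of_mem hH, hvH⟩
    · by_cases hdb : ∃ u z : V, (restrict blue W).edist u z ≠ ⊤ ∧
          ((3*(n+1)^2 : ℕ) : ℕ∞) ≤ (restrict blue W).edist u z
      · obtain ⟨Bl, P, hBlW, hPverts, hPspan, hPdiam, hPhit⟩ :=
          deep_step G blue red hb hr (fun h => (hsup h).symm) W (n+1) (by omega) hind hdb
        have hind' : ∀ s : Finset V, ↑s ⊆ ((W \ Bl : Finset V) : Set V) →
            (∀ u ∈ s, ∀ v ∈ s, u ≠ v → ¬ G.Adj u v) → s.card ≤ n := by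
          intro s hs hsind
          by_contra hgt
          push_neg at hgt
          obtain ⟨s', hs's, hs'card⟩ := Finset.exists_subset_card_eq (s := s) (n := n+1) (by omega)
          have hs'W : ↑s' ⊆ (W : Set V) := by
            intro a ha
            have := hs (Finset.mem_coe.mpr (hs's (Finset.mem_coe.mp ha)))
            rw [Finset.mem_coe, Finset.mem_sdiff] at this
            exact Finset.mem_coe.mpr this.1
          obtain ⟨y, hys', hyBl⟩ := hPhit s' hs'W hs'card
            (fun u hu v hv huv => hsind u (hs's hu) v (hs's hv) huv)
          have := hs (Finset.mem_coe.mpr (hs's hys'))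
          rw [Finset.mem_coe, Finset.mem_sdiff] at this
          exact this.2 hyBl
        obtain ⟨𝒞', h𝒞'card, h𝒞'mono, h𝒞'diam, h𝒞'cov⟩ := ih (W \ Bl) hind'
        refine ⟨insert P 𝒞', ?_, ?_, ?_, ?_⟩
        · calc (insert P 𝒞').card ≤ 𝒞'.card + 1 := Finset.card_insert_le _ _
            _ ≤ n + 1 := by omega
        · intro H hH
          rcases Finset.mem_insert.mp hH with rfl | hH
          · exact Or.inl hPspan
          · exact h𝒞'mono H hH
        · intro H hH
          rcases Finset.mem_insert.mp hH with rfl | hH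
          · exact hPdiam
          · intro u v; exact le_trans (h𝒞'diam H hH u v) hmono
        · intro v hv
          by_cases hvBl : v ∈ Bl
          · refine ⟨P, Finset.mem_insert_self _ _, ?_⟩
            rw [hPverts]; exact Finset.mem_coe.mpr hvBl
          · obtain ⟨H, hH, hvH⟩ := h𝒞'cov v (Finset.mem_sdiff.mpr ⟨hv, hvBl⟩)
            exact ⟨H, Finset.mem_insert_of_mem hH, hvH⟩
      · have hshr : ∀ u v : V, (restrict red W).edist u v ≠ ⊤ →
            (restrict red W).edist u v ≤ ((3*(n+1)^2 : ℕ) : ℕ∞) := by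
          intro u v hne
          by_contra hgt
          exact hdr ⟨u, v, hne, le_of_lt (not_le.mp hgt)⟩
        have hshb : ∀ u v : V, (restrict blue W).edist u v ≠ ⊤ →
            (restrict blue W).edist u v ≤ ((3*(n+1)^2 : ℕ) : ℕ∞) := by
          intro u v hne
          by_contra hgt
          exact hdb ⟨u, v, hne, le_of_lt (not_le.mp hgt)⟩
        exact shallow_cover G red blue hr hb hsup W (n+1) hind hshr hshb

end BDKaux

/-- Main theorem: for every finite graph `G` with independence number `α` and every
2-colouring of the edges of `G` (each edge gets at least one of red, blue), there is
a covering set of at most `α` monochromatic subgraphs, each of diameter at most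
`8α² + 12α + 4` (distances measured within the subgraph). -/
theorem bounded_diameter_konig {V : Type*} [Fintype V]
    (G red blue : SimpleGraph V) (hcol : red ⊔ blue = G) (α : ℕ)
    (hα : IsGreatest {n : ℕ | ∃ s : Finset V,
      s.card = n ∧ ∀ u ∈ s, ∀ v ∈ s, u ≠ v → ¬ G.Adj u v} α) :
    ∃ 𝒞 : Finset G.Subgraph,
      𝒞.card ≤ α ∧
      (∀ H ∈ 𝒞, H.spanningCoe ≤ red ∨ H.spanningCoe ≤ blue) ∧
      (∀ H ∈ 𝒞, ∀ u v : H.verts, H.coe.edist u v ≤ (8 * α ^ 2 + 12 * α + 4 : ℕ)) ∧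
      (∀ v : V, ∃ H ∈ 𝒞, v ∈ H.verts) := by
  have hind : ∀ s : Finset V, ↑s ⊆ ((Finset.univ : Finset V) : Set V) →
      (∀ u ∈ s, ∀ v ∈ s, u ≠ v → ¬ G.Adj u v) → s.card ≤ α := by
    intro s _ hsind
    exact hα.2 ⟨s, rfl, hsind⟩
  obtain ⟨𝒞, h1, h2, h3, h4⟩ := BDKaux.master G red blue hcol α Finset.univ hind
  exact ⟨𝒞, h1, h2, h3, fun v => h4 v (Finset.mem_univ v)⟩
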